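/- Let R be a commutative ring and S ⊆ R a countable multiplicative subset. Then the localization S⁻¹R, viewed as an R-module, has projective dimension at most 1. -/

import Mathlib

universe u

namespace Stmt0Aux

variable {R : Type u} [CommRing R] (S : Submonoid R) (s : ℕ → S)

/-- Partial products of the enumeration, as elements of `S`. -/
noncomputable def t (n : ℕ) : S := ∏ i ∈ Finset.range (n + 1), s i

/-- Products of a segment of the enumeration, in `R`. -/
noncomputable def p (n N : ℕ) : R := ∏ i ∈ Finset.Ico (n + 1) (N + 1), (s i : R)

lemma t_succ (n : ℕ) : t S s (n + 1) = t S s n * s (n + 1) := by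
  simp [t, Finset.prod_range_succ]

lemma p_self (n : ℕ) : p S s n n = 1 := by simp [p]

lemma p_succ (n N : ℕ) (h : n ≤ N) : p S s n (N + 1) = p S s n N * s (N + 1) := by
  rw [p, p, Finset.prod_Ico_succ_top (by omega)]

/-- The surjection `(ℕ →₀ R) → S⁻¹R`, `eₙ ↦ 1/tₙ`. -/
noncomputable def g : (ℕ →₀ R) →ₗ[R] Localization S :=
  Finsupp.lsum R fun n => LinearMap.toSpanSingleton R (Localization S)
    (IsLocalization.mk' (Localization S) 1 (t S s n))

/-- The map `(ℕ →₀ R) → (ℕ →₀ R)`, `eₙ ↦ eₙ - s_{n+1} e_{n+1}`. -/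
noncomputable def f : (ℕ →₀ R) →ₗ[R] (ℕ →₀ R) :=
  Finsupp.lsum R fun n => LinearMap.toSpanSingleton R (ℕ →₀ R)
    (Finsupp.single n 1 - Finsupp.single (n + 1) (s (n + 1) : R))

lemma f_single (n : ℕ) (r : R) :
    f S s (Finsupp.single n r)
      = Finsupp.single n r - Finsupp.single (n + 1) (r * (s (n + 1) : R)) := by
  simp [f, Finsupp.lsum_single, LinearMap.toSpanSingleton_apply, smul_sub,
    Finsupp.smul_single, smul_eq_mul, mul_one]

lemma g_single (n : ℕ) (r : R) :
    g S s (Finsupp.single n r) = IsLocalization.mk' (Localization S) r (t S s n) := by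
  simp [g, Finsupp.lsum_single, LinearMap.toSpanSingleton_apply]

lemma f_apply_zero (x : ℕ →₀ R) : f S s x 0 = x 0 := by
  induction x using Finsupp.induction_linear with
  | zero => simp
  | add a b ha hb => simp [ha, hb]
  | single n r =>
      rw [f_single]
      simp [Finsupp.single_apply]

lemma f_apply_succ (x : ℕ →₀ R) (m : ℕ) :
    f S s x (m + 1) = x (m + 1) - x m * (s (m + 1) : R) := by
  induction x using Finsupp.induction_linear with
  | zero => simp
  | add a b ha hb => simp [ha, hb]; ring
  | single n r =>
      rw [f_single]
      simp only [Finsupp.sub_apply, Finsupp.single_apply]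
      by_cases h1 : n = m + 1
      · subst h1
        simp [Nat.succ_ne_self, (by omega : ¬ (m + 1 = m))]
      · by_cases h2 : n = m
        · subst h2
          simp [h1]
        · simp [h1, h2, (by omega : ¬ (n + 1 = m + 1))]

lemma f_injective : Function.Injective (f S s) := by
  rw [injective_iff_map_eq_zero]
  intro x hx
  ext m
  induction m with
  | zero =>
      have := f_apply_zero S s x
      rw [hx] at this
      simpa using this.symm
  | succ m ih =>
      have h2 := f_apply_succ S s x m
      rw [hx] at h2
      simp only [Finsupp.coe_zero, Pi.zero_apply] at h2 ih ⊢
      rw [ih, zero_mul, sub_zero] at h2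
      exact h2.symm

lemma gf_zero : (g S s).comp (f S s) = 0 := by
  apply Finsupp.lhom_ext
  intro n r
  simp only [LinearMap.comp_apply, LinearMap.zero_apply]
  rw [f_single, map_sub, g_single, g_single, t_succ]
  rw [show (r * (s (n + 1) : R)) = r * (s (n + 1) : R) from rfl]
  rw [← IsLocalization.mk'_cancel r (t S s n) (s (n + 1))]
  rw [sub_eq_zero]

lemma reduce_single (n N : ℕ) (h : n ≤ N) (c : R) :
    Finsupp.single n c - Finsupp.single N (c * p S s n N) ∈ LinearMap.range (f S s) := by
  induction N, h using Nat.le_induction with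
  | base =>
      rw [p_self, mul_one]
      simp
  | succ N hN ih =>
      have key : Finsupp.single n c - Finsupp.single (N + 1) (c * p S s n (N + 1))
          = (Finsupp.single n c - Finsupp.single N (c * p S s n N))
            + f S s (Finsupp.single N (c * p S s n N)) := by
        rw [f_single, p_succ S s n N hN]
        ring_nf
        abel
      rw [key]
      exact Submodule.add_mem _ ih (LinearMap.mem_range_self _ _)

lemma reduce (x : ℕ →₀ R) (N : ℕ) (h : ∀ k ∈ x.support, k ≤ N) :
    ∃ c : R, x - Finsupp.single N c ∈ LinearMap.range (f S s) := by
  refine ⟨∑ n ∈ x.support, x n * p S s n N, ?_⟩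
  have hx : x = ∑ n ∈ x.support, Finsupp.single n (x n) := by
    conv_lhs => rw [← Finsupp.sum_single x]
    rfl
  have hs : Finsupp.single N (∑ n ∈ x.support, x n * p S s n N)
      = ∑ n ∈ x.support, Finsupp.single N (x n * p S s n N) := by
    rw [Finsupp.single_finset_sum]
  rw [hs]
  nth_rewrite 1 [hx]
  rw [← Finset.sum_sub_distrib]
  exact Submodule.sum_mem _ fun n hn => reduce_single S s n N (h n hn) (x n)

end Stmt0Aux

open Stmt0Aux in
/-- For a commutative ring `R` and a countable multiplicative subset `S ⊆ R`,
the localization `S⁻¹R` has projective dimension at most `1` as an `R`-module,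
i.e. it admits a projective resolution of length `1`. -/
theorem stmt0 (R : Type u) [CommRing R] (S : Submonoid R) (hS : Countable S) :
    ∃ (P₀ P₁ : Type u) (_ : AddCommGroup P₀) (_ : AddCommGroup P₁)
      (_ : Module R P₀) (_ : Module R P₁)
      (f : P₁ →ₗ[R] P₀) (g : P₀ →ₗ[R] Localization S),
      Module.Projective R P₀ ∧ Module.Projective R P₁ ∧
      Function.Injective f ∧ Function.Surjective g ∧ Function.Exact f g := by
  classical
  -- enumerate `S` so that each element occurs at arbitrarily large indices
  have : Nonempty S := ⟨1⟩
  obtain ⟨σ, hσ⟩ := exists_surjective_nat S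
  set s : ℕ → S := fun n => σ (Nat.unpair n).1 with hs_def
  have hs : ∀ (u : S) (N : ℕ), ∃ M, N < M ∧ s M = u := by
    intro u N
    obtain ⟨k, hk⟩ := hσ u
    refine ⟨Nat.pair k (N + 1), ?_, ?_⟩
    · have := Nat.right_le_pair k (N + 1); omega
    · simp [hs_def, Nat.unpair_pair, hk]
  refine ⟨ℕ →₀ R, ℕ →₀ R, inferInstance, inferInstance, inferInstance, inferInstance,
    f S s, g S s, inferInstance, inferInstance, f_injective S s, ?_, ?_⟩
  · -- surjectivity of g
    intro z
    obtain ⟨⟨r, u⟩, rfl⟩ := IsLocalization.mk'_surjective S z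
    obtain ⟨M, _, hM⟩ := hs u 0
    have htM : t S s M = (∏ i ∈ Finset.range M, s i) * u := by
      rw [t, Finset.prod_range_succ, hM]
    refine ⟨Finsupp.single M (r * (∏ i ∈ Finset.range M, s i : S)), ?_⟩
    rw [g_single, htM, mul_comm (∏ i ∈ Finset.range M, s i) u]
    exact IsLocalization.mk'_cancel r u _
  · -- exactness
    rw [LinearMap.exact_iff]
    apply le_antisymm
    · -- ker g ⊆ range f
      intro y hy
      rw [LinearMap.mem_ker] at hy
      obtain ⟨c, hc⟩ := reduce S s y (y.support.sup id)
        (fun k hk => Finset.le_sup (f := id) hk)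
      set N := y.support.sup id
      obtain ⟨w, hw⟩ := hc
      have hgc : g S s (Finsupp.single N c) = 0 := by
        have : g S s (y - Finsupp.single N c) = 0 := by
          rw [← hw, ← LinearMap.comp_apply, gf_zero, LinearMap.zero_apply]
        rw [map_sub, hy, zero_sub, neg_eq_zero] at this
        exact this
      rw [g_single, IsLocalization.mk'_eq_zero_iff] at hgc
      obtain ⟨u, hu⟩ := hgc
      obtain ⟨M, hNM, hM⟩ := hs u N
      have hrange := reduce_single S s N M (le_of_lt hNM) c
      have hzero : c * p S s N M = 0 := by
        have hM' : M - 1 + 1 = M := by omega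
        have : p S s N M = p S s N (M - 1) * (s M : R) := by
          conv_lhs => rw [← hM']
          rw [p_succ S s N (M - 1) (by omega), hM']
        rw [this, hM]
        calc c * (p S s N (M - 1) * (u : R)) = p S s N (M - 1) * ((u : R) * c) := by ring
        _ = 0 := by rw [hu, mul_zero]
      rw [hzero, Finsupp.single_zero, sub_zero] at hrange
      have : y = (y - Finsupp.single N c) + Finsupp.single N c := by abel
      rw [this, ← hw]
      exact Submodule.add_mem _ (LinearMap.mem_range_self _ _) hrange
    · -- range f ⊆ ker g
      rintro y ⟨x, rfl⟩
      rw [LinearMap.mem_ker, ← LinearMap.comp_apply, gf_zero, LinearMap.zero_apply]
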